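/- Let F : [a,b] → ℝ be a nondecreasing, absolutely continuous function with nonnegative values whose derivative is at most L > 0 almost everywhere. Then ∫_a^b F(t) dt ≥ (F(b)² − F(a)²) / (2L). -/

import Mathlib

open MeasureTheory

theorem integral_ge_sq_diff_div_lipschitz (a b L : ℝ) (hab : a ≤ b) (hL : 0 < L)
    (F F' : ℝ → ℝ)
    (hmono : MonotoneOn F (Set.Icc a b))
    (hnonneg : ∀ t ∈ Set.Icc a b, 0 ≤ F t)
    (hderiv : ∀ᵐ t ∂(volume.restrict (Set.Icc a b)), HasDerivAt F (F' t) t)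
    (hbound : ∀ᵐ t ∂(volume.restrict (Set.Icc a b)), F' t ≤ L)
    (hint : IntervalIntegrable F' volume a b)
    (hFTC : ∀ x ∈ Set.Icc a b, F x - F a = ∫ t in a..x, F' t) :
    (F b ^ 2 - F a ^ 2) / (2 * L) ≤ ∫ t in a..b, F t := by
  have hb : b ∈ Set.Icc a b := Set.right_mem_Icc.2 hab
  have ha : a ∈ Set.Icc a b := Set.left_mem_Icc.2 hab
  have hFab : F a ≤ F b := hmono ha hb hab
  have hFa0 : 0 ≤ F a := hnonneg a ha
  -- key estimate : F b - F x ≤ L * (b - x)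
  have key : ∀ x ∈ Set.Icc a b, F b - F x ≤ L * (b - x) := by
    intro x hx
    have hint1 : IntervalIntegrable F' volume a x :=
      hint.mono_set (by
        rw [Set.uIcc_of_le hx.1, Set.uIcc_of_le hab]
        exact Set.Icc_subset_Icc le_rfl hx.2)
    have hint2 : IntervalIntegrable F' volume x b :=
      hint.mono_set (by
        rw [Set.uIcc_of_le hx.2, Set.uIcc_of_le hab]
        exact Set.Icc_subset_Icc hx.1 le_rfl)
    have hadd : (∫ t in a..x, F' t) + (∫ t in x..b, F' t) = ∫ t in a..b, F' t :=
      intervalIntegral.integral_add_adjacent_intervals hint1 hint2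
    have h1 : F x - F a = ∫ t in a..x, F' t := hFTC x hx
    have h2 : F b - F a = ∫ t in a..b, F' t := hFTC b hb
    have h3 : F b - F x = ∫ t in x..b, F' t := by linarith
    have hboundx : ∀ᵐ t ∂(volume.restrict (Set.Icc x b)), F' t ≤ L :=
      ae_restrict_of_ae_restrict_of_subset (Set.Icc_subset_Icc hx.1 le_rfl) hbound
    have h4 : (∫ t in x..b, F' t) ≤ ∫ _t in x..b, L := by
      apply intervalIntegral.integral_mono_ae_restrict hx.2 hint2
        (intervalIntegrable_const)
      exact hboundx
    rw [intervalIntegral.integral_const, smul_eq_mul] at h4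
    linarith
  obtain ⟨c, hc⟩ : ∃ c : ℝ, c = b - (F b - F a) / L := ⟨_, rfl⟩
  have hd0 : 0 ≤ (F b - F a) / L := div_nonneg (by linarith) hL.le
  have hcb : c ≤ b := by rw [hc]; linarith
  have hac : a ≤ c := by
    have h := key a ha
    have : (F b - F a) / L ≤ b - a := by
      rw [div_le_iff₀ hL]; linarith
    rw [hc]; linarith
  set g : ℝ → ℝ := fun x => max (F a) (F b - L * (b - x)) with hg
  have hgcont : Continuous g := by
    apply Continuous.max continuous_const
    continuity
  have hFint : IntervalIntegrable F volume a b := by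
    apply MonotoneOn.intervalIntegrable
    rwa [Set.uIcc_of_le hab]
  have hglef : ∀ x ∈ Set.Icc a b, g x ≤ F x := by
    intro x hx
    apply max_le (hmono ha hx hx.1)
    linarith [key x hx]
  have hmain : (∫ t in a..b, g t) ≤ ∫ t in a..b, F t :=
    intervalIntegral.integral_mono_on hab (hgcont.intervalIntegrable a b) hFint hglef
  -- compute the integral of g
  have hsplit : (∫ t in a..c, g t) + (∫ t in c..b, g t) = ∫ t in a..b, g t :=
    intervalIntegral.integral_add_adjacent_intervals
      (hgcont.intervalIntegrable a c) (hgcont.intervalIntegrable c b)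
  have h1 : (∫ t in a..c, g t) = F a * (c - a) := by
    rw [intervalIntegral.integral_congr (g := fun _ => F a)]
    · rw [intervalIntegral.integral_const, smul_eq_mul]; ring
    · intro x hx
      rw [Set.uIcc_of_le hac] at hx
      apply max_eq_left
      have : (F b - F a) / L ≤ b - x := by rw [hc] at hx; linarith [hx.2]
      rw [div_le_iff₀ hL] at this
      linarith
  have h2 : (∫ t in c..b, g t) = (b - c) * (F b - L * b) + L * ((b ^ 2 - c ^ 2) / 2) := by
    rw [intervalIntegral.integral_congr (g := fun x => (F b - L * b) + L * x)]
    · rw [intervalIntegral.integral_add intervalIntegrable_const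
        (show IntervalIntegrable (fun x : ℝ => L * x) volume c b from
          (continuous_const.mul continuous_id').intervalIntegrable c b),
        intervalIntegral.integral_const, intervalIntegral.integral_const_mul,
        integral_id, smul_eq_mul]
    · intro x hx
      rw [Set.uIcc_of_le hcb] at hx
      have hmax : F a ≤ F b - L * (b - x) := by
        have : b - x ≤ (F b - F a) / L := by rw [hc] at hx; linarith [hx.1]
        rw [le_div_iff₀ hL] at this
        linarith
      rw [hg]
      simp only [max_eq_right hmax]
      ring
  have hLd : L * ((F b - F a) / L) = F b - F a := by field_simp
  have hval : (F b ^ 2 - F a ^ 2) / (2 * L) ≤ ∫ t in a..b, g t := by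
    rw [← hsplit, h1, h2]
    have hcd : b - c = (F b - F a) / L := by rw [hc]; ring
    have hfin : (F b ^ 2 - F a ^ 2) / (2 * L) =
        (b - c) * (F b - L * b) + L * ((b ^ 2 - c ^ 2) / 2) := by
      rw [hc]
      field_simp
      ring
    linarith [mul_nonneg hFa0 (sub_nonneg.2 hac)]
  linarith
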